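/- Let φ be a unital positive linear map on C[0,1] sending C[0,1]_{(a,k)} into C[0,1]_{(b,k)}, and let μ₀, μ₁ be the Borel probability measures with φ(f)(0) = ∫f dμ₀, φ(f)(1) = ∫f dμ₁. Let {X₁,…,Xₙ} be a partition of [0,1] into connected Borel sets with 0 ∈ X₁ and 1 ∈ Xₙ. Then μ₀(Xᵢ) = (b/(b+k)) μ₁(Xᵢ) for all i = 2,…,n−1, and (a/(a+k)) μ₀(X₁) + μ₀(Xₙ) = (b/(b+k)) ((a/(a+k)) μ₁(X₁) + μ₁(Xₙ)). -/

import Mathlib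

open ContinuousMap MeasureTheory

theorem stmt8 (a k b : ℕ) (ha : 0 < a) (hk : 0 < k) (hb : 0 < b)
    (φ : C(unitInterval, ℝ) →ₗ[ℝ] C(unitInterval, ℝ))
    (hunital : φ 1 = 1)
    (hpos : ∀ f : C(unitInterval, ℝ), (∀ x, 0 ≤ f x) → ∀ x, 0 ≤ φ f x)
    (hsub : ∀ f : C(unitInterval, ℝ),
      f 0 = (a : ℝ) / ((a : ℝ) + (k : ℝ)) * f 1 →
      φ f 0 = (b : ℝ) / ((b : ℝ) + (k : ℝ)) * φ f 1)
    (μ₀ μ₁ : Measure unitInterval)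
    [IsProbabilityMeasure μ₀] [IsProbabilityMeasure μ₁]
    (hμ₀ : ∀ f : C(unitInterval, ℝ), φ f 0 = ∫ t, f t ∂μ₀)
    (hμ₁ : ∀ f : C(unitInterval, ℝ), φ f 1 = ∫ t, f t ∂μ₁)
    (n : ℕ) (hn : 2 ≤ n) (X : Fin n → Set unitInterval)
    (hmeas : ∀ i, MeasurableSet (X i))
    (hconn : ∀ i, IsConnected (X i))
    (hdisj : Pairwise (Function.onFun Disjoint X))
    (hcover : ⋃ i, X i = Set.univ)
    (h0 : (0 : unitInterval) ∈ X ⟨0, by omega⟩)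
    (h1 : (1 : unitInterval) ∈ X ⟨n - 1, by omega⟩) :
    (∀ i : Fin n, 1 ≤ i.val → i.val ≤ n - 2 →
      (μ₀ (X i)).toReal = (b : ℝ) / ((b : ℝ) + (k : ℝ)) * (μ₁ (X i)).toReal) ∧
    (a : ℝ) / ((a : ℝ) + (k : ℝ)) * (μ₀ (X ⟨0, by omega⟩)).toReal +
        (μ₀ (X ⟨n - 1, by omega⟩)).toReal =
      (b : ℝ) / ((b : ℝ) + (k : ℝ)) *
        ((a : ℝ) / ((a : ℝ) + (k : ℝ)) * (μ₁ (X ⟨0, by omega⟩)).toReal +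
          (μ₁ (X ⟨n - 1, by omega⟩)).toReal) := by
  have hk' : (0:ℝ) < (k:ℝ) := by exact_mod_cast hk
  have ha' : (0:ℝ) < (a:ℝ) := by exact_mod_cast ha
  have hb' : (0:ℝ) < (b:ℝ) := by exact_mod_cast hb
  have hak : ((a:ℝ) + (k:ℝ)) ≠ 0 := by positivity
  have hbk : ((b:ℝ) + (k:ℝ)) ≠ 0 := by positivity
  have h1α : (1 - (a:ℝ)/((a:ℝ)+(k:ℝ))) ≠ 0 := by
    have : 1 - (a:ℝ)/((a:ℝ)+(k:ℝ)) = (k:ℝ)/((a:ℝ)+(k:ℝ)) := by field_simp; ring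
    rw [this]; positivity
  -- the key functional identity
  have key : ∀ f : C(unitInterval, ℝ),
      ∫ t, f t ∂μ₀ + (a:ℝ)/((b:ℝ)+(k:ℝ)) * f 1 =
      (b:ℝ)/((b:ℝ)+(k:ℝ)) * ∫ t, f t ∂μ₁ + ((a:ℝ)+(k:ℝ))/((b:ℝ)+(k:ℝ)) * f 0 := by
    intro f
    set s : ℝ := (f 0 - (a:ℝ)/((a:ℝ)+(k:ℝ)) * f 1) / (1 - (a:ℝ)/((a:ℝ)+(k:ℝ))) with hs_def
    set g : C(unitInterval, ℝ) := f - s • (1 : C(unitInterval, ℝ)) with hg_def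
    have hg0 : g 0 = f 0 - s := by simp [hg_def]
    have hg1 : g 1 = f 1 - s := by simp [hg_def]
    have hgsub : g 0 = (a:ℝ)/((a:ℝ)+(k:ℝ)) * g 1 := by
      rw [hg0, hg1, hs_def]; field_simp [hk'.ne']; ring
    have hφg : φ g = φ f - s • (1 : C(unitInterval, ℝ)) := by
      rw [hg_def, map_sub, LinearMap.map_smul, hunital]
    have h := hsub g hgsub
    rw [hφg] at h
    simp only [ContinuousMap.sub_apply, ContinuousMap.smul_apply, ContinuousMap.one_apply,
      smul_eq_mul, mul_one] at h
    rw [hμ₀ f, hμ₁ f] at h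
    have hs : s * (1 - (b:ℝ)/((b:ℝ)+(k:ℝ))) =
        ((a:ℝ)+(k:ℝ))/((b:ℝ)+(k:ℝ)) * (f 0 - (a:ℝ)/((a:ℝ)+(k:ℝ)) * f 1) := by
      rw [hs_def]; field_simp [hk'.ne']; ring
    have hcanc : ((a:ℝ)+(k:ℝ))/((b:ℝ)+(k:ℝ)) * ((a:ℝ)/((a:ℝ)+(k:ℝ))) = (a:ℝ)/((b:ℝ)+(k:ℝ)) := by
      field_simp
    linear_combination h + hs - f 1 * hcanc
  -- measure-level identity
  set E := ENNReal.ofReal ((a:ℝ)/((b:ℝ)+(k:ℝ))) with hE_def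
  set C := ENNReal.ofReal ((b:ℝ)/((b:ℝ)+(k:ℝ))) with hC_def
  set L := ENNReal.ofReal (((a:ℝ)+(k:ℝ))/((b:ℝ)+(k:ℝ))) with hL_def
  have hEt : E.toReal = (a:ℝ)/((b:ℝ)+(k:ℝ)) := ENNReal.toReal_ofReal (by positivity)
  have hCt : C.toReal = (b:ℝ)/((b:ℝ)+(k:ℝ)) := ENNReal.toReal_ofReal (by positivity)
  have hLt : L.toReal = ((a:ℝ)+(k:ℝ))/((b:ℝ)+(k:ℝ)) := ENNReal.toReal_ofReal (by positivity)
  haveI hfinE : IsFiniteMeasure (E • Measure.dirac (1:unitInterval)) := by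
    refine ⟨?_⟩
    rw [Measure.smul_apply, smul_eq_mul]
    exact ENNReal.mul_lt_top ENNReal.ofReal_lt_top (measure_lt_top _ _)
  haveI hfinL : IsFiniteMeasure (L • Measure.dirac (0:unitInterval)) := by
    refine ⟨?_⟩
    rw [Measure.smul_apply, smul_eq_mul]
    exact ENNReal.mul_lt_top ENNReal.ofReal_lt_top (measure_lt_top _ _)
  haveI hfinC : IsFiniteMeasure (C • μ₁) := by
    refine ⟨?_⟩
    rw [Measure.smul_apply, smul_eq_mul]
    exact ENNReal.mul_lt_top ENNReal.ofReal_lt_top (measure_lt_top _ _)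
  haveI hfinA : IsFiniteMeasure (μ₀ + E • Measure.dirac (1:unitInterval)) :=
    inferInstance
  haveI hfinB : IsFiniteMeasure (C • μ₁ + L • Measure.dirac (0:unitInterval)) :=
    inferInstance
  have hreal : ∀ f : C(unitInterval, ℝ),
      ∫ t, f t ∂(μ₀ + E • Measure.dirac (1:unitInterval)) =
      ∫ t, f t ∂(C • μ₁ + L • Measure.dirac (0:unitInterval)) := by
    intro f
    have hint : ∀ (μ : Measure unitInterval) [IsFiniteMeasure μ],
        Integrable (fun t => f t) μ := fun μ _ =>
      (BoundedContinuousFunction.mkOfCompact f).integrable μ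
    rw [integral_add_measure (hint _) (hint _), integral_add_measure (hint _) (hint _),
      integral_smul_measure, integral_smul_measure, integral_smul_measure,
      integral_dirac, integral_dirac, smul_eq_mul, smul_eq_mul, smul_eq_mul,
      hEt, hCt, hLt]
    exact key f
  have hABm : μ₀ + E • Measure.dirac (1:unitInterval) =
      C • μ₁ + L • Measure.dirac (0:unitInterval) := by
    apply ext_of_forall_lintegral_eq_of_IsFiniteMeasure
    intro f
    rw [lintegral_coe_eq_integral _ (f.integrable_of_nnreal _),
      lintegral_coe_eq_integral _ (f.integrable_of_nnreal _)]
    congr 1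
    exact hreal ⟨fun x => (f x : ℝ), NNReal.continuous_coe.comp f.continuous⟩
  -- apply to sets
  have happ : ∀ S : Set unitInterval,
      μ₀ S + E * S.indicator 1 (1:unitInterval) = C * μ₁ S + L * S.indicator 1 (0:unitInterval) := by
    intro S
    have := congrArg (fun m : Measure unitInterval => m S) hABm
    simpa [Measure.add_apply, Measure.smul_apply, smul_eq_mul, Measure.dirac_apply] using this
  have hnotmem : ∀ (i j : Fin n) (x : unitInterval), i ≠ j → x ∈ X j → x ∉ X i := by
    intro i j x hij hxj hxi
    exact Set.disjoint_left.mp (hdisj hij) hxi hxj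
  constructor
  · intro i hi1 hi2
    have hi0 : i ≠ ⟨0, by omega⟩ := by
      intro h; rw [Fin.ext_iff] at h; simp at h; omega
    have hiN : i ≠ ⟨n - 1, by omega⟩ := by
      intro h; rw [Fin.ext_iff] at h; simp at h; omega
    have hm0 : (0:unitInterval) ∉ X i := hnotmem i _ _ hi0 h0
    have hm1 : (1:unitInterval) ∉ X i := hnotmem i _ _ hiN h1
    have := happ (X i)
    rw [Set.indicator_of_notMem hm1, Set.indicator_of_notMem hm0] at this
    simp only [mul_zero, add_zero] at this
    rw [this, ENNReal.toReal_mul, hCt]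
  · have hne : (⟨0, by omega⟩ : Fin n) ≠ ⟨n - 1, by omega⟩ := by
      intro h; rw [Fin.ext_iff] at h; simp at h; omega
    have hm10 : (1:unitInterval) ∉ X ⟨0, by omega⟩ := hnotmem _ _ _ hne h1
    have hm0N : (0:unitInterval) ∉ X ⟨n - 1, by omega⟩ := hnotmem _ _ _ hne.symm h0
    have e0 := happ (X ⟨0, by omega⟩)
    rw [Set.indicator_of_notMem hm10, Set.indicator_of_mem h0] at e0
    simp only [mul_zero, add_zero, Pi.one_apply, mul_one] at e0
    have e1 := happ (X ⟨n - 1, by omega⟩)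
    rw [Set.indicator_of_mem h1, Set.indicator_of_notMem hm0N] at e1
    simp only [mul_zero, add_zero, Pi.one_apply, mul_one] at e1
    -- convert to reals
    have fin : ∀ S : Set unitInterval, ∀ μ : Measure unitInterval, IsProbabilityMeasure μ →
        C * μ S ≠ ⊤ := by
      intro S μ hμ
      exact (ENNReal.mul_lt_top ENNReal.ofReal_lt_top (measure_lt_top _ _)).ne
    have r0 : (μ₀ (X ⟨0, by omega⟩)).toReal =
        (b:ℝ)/((b:ℝ)+(k:ℝ)) * (μ₁ (X ⟨0, by omega⟩)).toReal + ((a:ℝ)+(k:ℝ))/((b:ℝ)+(k:ℝ)) := by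
      rw [e0, ENNReal.toReal_add (fin _ _ inferInstance) ENNReal.ofReal_ne_top,
        ENNReal.toReal_mul, hCt, hLt]
    have r1 : (μ₀ (X ⟨n - 1, by omega⟩)).toReal + (a:ℝ)/((b:ℝ)+(k:ℝ)) =
        (b:ℝ)/((b:ℝ)+(k:ℝ)) * (μ₁ (X ⟨n - 1, by omega⟩)).toReal := by
      have := congrArg ENNReal.toReal e1
      rw [ENNReal.toReal_add (measure_lt_top _ _).ne ENNReal.ofReal_ne_top,
        ENNReal.toReal_mul, hCt, hEt] at this
      exact this
    have hcanc : (a:ℝ)/((a:ℝ)+(k:ℝ)) * (((a:ℝ)+(k:ℝ))/((b:ℝ)+(k:ℝ))) = (a:ℝ)/((b:ℝ)+(k:ℝ)) := by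
      field_simp
    linear_combination ((a:ℝ)/((a:ℝ)+(k:ℝ))) * r0 + r1 + hcanc
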